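/- In the Cardinal Direction Calculus on ℚ², the first-coordinate order is pp-definable: for points X, Y, X₁ < Y₁ holds iff there exist points X', Y' with X' (N) X, Y' (N) Y, and X' (W) Y'. (N: same first coordinate, larger second; W: smaller first coordinate, same second.) -/
import Mathlib

/-- `X (N) Y`: X₁ = Y₁ ∧ X₂ > Y₂. -/
def CDCn (X Y : ℚ × ℚ) : Prop := X.1 = Y.1 ∧ X.2 > Y.2

/-- `X (W) Y`: X₁ < Y₁ ∧ X₂ = Y₂. -/
def CDCw (X Y : ℚ × ℚ) : Prop := X.1 < Y.1 ∧ X.2 = Y.2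

theorem first_coordinate_lt_pp_definable (X Y : ℚ × ℚ) :
    X.1 < Y.1 ↔ ∃ X' Y' : ℚ × ℚ, CDCn X' X ∧ CDCn Y' Y ∧ CDCw X' Y' := by
  constructor
  · intro h
    exact ⟨(X.1, max X.2 Y.2 + 1), (Y.1, max X.2 Y.2 + 1),
      ⟨rfl, lt_of_le_of_lt (le_max_left _ _) (lt_add_one _)⟩,
      ⟨rfl, lt_of_le_of_lt (le_max_right _ _) (lt_add_one _)⟩,
      h, rfl⟩
  · rintro ⟨X', Y', ⟨h1, _⟩, ⟨h2, _⟩, h3, _⟩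
    rw [← h1, ← h2]; exact h3
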